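/- Let R_n = F_2[a_1,...,a_n]/(a_i³, a_i² + a_j², a_i a_k for i ≠ k) with all a_i of degree 1 (n ≥ 1). Then the group of units R_n^× is isomorphic to Z/4 × (Z/2)^{n-1}; in particular it has order 2^{n+1}, exactly 2^n - 1 elements of order 2, and exactly 2^n elements of order 4. -/

import Mathlib

open MvPolynomial

/-- The relations defining `H^*(P_n; F_2)` with degree-one generators `a_i = X i`:
`a_i³`, `a_i² + a_j²`, and `a_i a_k` for `i ≠ k`. -/
def projRelations (n : ℕ) : Set (MvPolynomial (Fin n) (ZMod 2)) :=
  {p | ∃ i, p = X i ^ 3} ∪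
  {p | ∃ i j, p = X i ^ 2 + X j ^ 2} ∪
  {p | ∃ i k, i ≠ k ∧ p = X i * X k}

/-- The (ungraded) mod 2 cohomology ring of the connected sum `P_n` of `n` copies of `RP²`. -/
def ProjSumCohomology (n : ℕ) : Type :=
  MvPolynomial (Fin n) (ZMod 2) ⧸ Ideal.span (projRelations n)

noncomputable instance (n : ℕ) : CommRing (ProjSumCohomology n) :=
  Ideal.Quotient.commRing _


open Matrix

namespace ProjAux

@[ext] structure Model (n : ℕ) where
  c : ZMod 2
  v : Fin n → ZMod 2
  d : ZMod 2

namespace Model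

variable {n : ℕ}

instance : Zero (Model n) := ⟨⟨0, 0, 0⟩⟩
instance : One (Model n) := ⟨⟨1, 0, 0⟩⟩
instance : Add (Model n) := ⟨fun x y => ⟨x.c + y.c, x.v + y.v, x.d + y.d⟩⟩
instance : Neg (Model n) := ⟨id⟩
instance : Mul (Model n) :=
  ⟨fun x y => ⟨x.c * y.c, x.c • y.v + y.c • x.v, x.c * y.d + y.c * x.d + x.v ⬝ᵥ y.v⟩⟩

@[simp] lemma zero_c : (0 : Model n).c = 0 := rfl
@[simp] lemma zero_v : (0 : Model n).v = 0 := rfl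
@[simp] lemma zero_d : (0 : Model n).d = 0 := rfl
@[simp] lemma one_c : (1 : Model n).c = 1 := rfl
@[simp] lemma one_v : (1 : Model n).v = 0 := rfl
@[simp] lemma one_d : (1 : Model n).d = 0 := rfl
@[simp] lemma add_c (x y : Model n) : (x + y).c = x.c + y.c := rfl
@[simp] lemma add_v (x y : Model n) : (x + y).v = x.v + y.v := rfl
@[simp] lemma add_d (x y : Model n) : (x + y).d = x.d + y.d := rfl
@[simp] lemma neg_eq (x : Model n) : -x = x := rfl
@[simp] lemma mul_c (x y : Model n) : (x * y).c = x.c * y.c := rfl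
@[simp] lemma mul_v (x y : Model n) : (x * y).v = x.c • y.v + y.c • x.v := rfl
@[simp] lemma mul_d (x y : Model n) : (x * y).d = x.c * y.d + y.c * x.d + x.v ⬝ᵥ y.v := rfl

set_option maxHeartbeats 1000000 in
instance : CommRing (Model n) where
  nsmul k x := ⟨k • x.c, k • x.v, k • x.d⟩
  nsmul_zero x := Model.ext (zero_smul _ _) (zero_smul _ _) (zero_smul _ _)
  nsmul_succ k x := Model.ext (succ_nsmul _ _) (succ_nsmul _ _) (succ_nsmul _ _)
  zsmul k x := ⟨k • x.c, k • x.v, k • x.d⟩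
  zsmul_zero' x := Model.ext (zero_smul _ _) (zero_smul _ _) (zero_smul _ _)
  zsmul_succ' k x := by ext <;> simp only [HSMul.hSMul, SMul.smul] <;> simp [add_smul]
  zsmul_neg' k x := by
    ext <;> simp only [HSMul.hSMul, SMul.smul] <;> simp [CharTwo.neg_eq] <;> simp [add_smul]
  add_assoc x y z := by ext <;> simp [add_assoc]
  zero_add x := by ext <;> simp
  add_zero x := by ext <;> simp
  add_comm x y := by ext <;> simp [add_comm] <;> try exact congrFun (add_comm x.v y.v) _
  neg_add_cancel x := by
    ext <;> simp [CharTwo.add_self_eq_zero]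
  mul_assoc x y z := by
    ext
    · simp [mul_assoc]
    · simp [smul_add, smul_smul]; ring
    · simp [dotProduct_add, add_dotProduct, dotProduct_smul,
        smul_dotProduct, smul_eq_mul, dotProduct_comm]; ring
  one_mul x := by ext <;> simp
  mul_one x := by ext <;> simp
  left_distrib x y z := by
    ext
    · simp [mul_add]
    · simp [smul_add]; ring
    · simp [dotProduct_add]; ring
  right_distrib x y z := by
    ext
    · simp [add_mul]
    · simp [smul_add]; ring
    · simp [add_dotProduct]; ring
  zero_mul x := by ext <;> simp
  mul_zero x := by ext <;> simp
  mul_comm x y := by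
    ext
    · simp [mul_comm]
    · simp [add_comm]
    · simp [dotProduct_comm]; ring

end Model

open Model

variable {n : ℕ}

/-- the constants embedding -/
def CM : ZMod 2 →+* Model n where
  toFun a := ⟨a, 0, 0⟩
  map_one' := rfl
  map_mul' a b := by ext <;> simp
  map_zero' := rfl
  map_add' a b := by ext <;> simp

/-- the generators -/
def gen (i : Fin n) : Model n := ⟨0, Pi.single i 1, 0⟩

noncomputable def φ : MvPolynomial (Fin n) (ZMod 2) →+* Model n :=
  eval₂Hom CM gen

@[simp] lemma φ_X (i : Fin n) : φ (X i) = gen i := by simp [φ]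
@[simp] lemma φ_C (a : ZMod 2) : φ (C a : MvPolynomial (Fin n) (ZMod 2)) = CM a := by simp [φ]

lemma gen_mul (i j : Fin n) : gen i * gen j = ⟨0, 0, if i = j then 1 else 0⟩ := by
  ext <;> simp [gen, dotProduct_single, Pi.single_apply, eq_comm]

lemma gen_sq (i : Fin n) : gen i * gen i = ⟨0, 0, 1⟩ := by simp [gen_mul]

noncomputable abbrev I (n : ℕ) : Ideal (MvPolynomial (Fin n) (ZMod 2)) := Ideal.span (projRelations n)

lemma rel_mem_x3 (i : Fin n) : X i ^ 3 ∈ I n :=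
  Ideal.subset_span (Or.inl (Or.inl ⟨i, rfl⟩))
lemma rel_mem_sq (i j : Fin n) : X i ^ 2 + X j ^ 2 ∈ I n :=
  Ideal.subset_span (Or.inl (Or.inr ⟨i, j, rfl⟩))
lemma rel_mem_mul {i k : Fin n} (h : i ≠ k) : X i * X k ∈ I n :=
  Ideal.subset_span (Or.inr ⟨i, k, h, rfl⟩)

lemma φ_rel : ∀ p ∈ projRelations n, φ p = 0 := by
  rintro p (⟨⟨i, rfl⟩ | ⟨i, j, rfl⟩⟩ | ⟨i, k, hik, rfl⟩)
  · have : φ (X i ^ 3) = gen i * gen i * gen i := by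
      rw [pow_succ, pow_two, _root_.map_mul, _root_.map_mul, φ_X]
    rw [this, gen_sq]
    ext <;> simp [gen, dotProduct_single]
  · rw [map_add, map_pow, map_pow, φ_X, φ_X, pow_two, pow_two, gen_sq, gen_sq]
    ext <;> simp [CharTwo.add_self_eq_zero]
  · rw [_root_.map_mul, φ_X, φ_X, gen_mul, if_neg hik]
    rfl

noncomputable def ψ : ProjSumCohomology n →+* Model n :=
  Ideal.Quotient.lift (I n) φ (by
    intro p hp
    refine Submodule.span_induction ?_ ?_ ?_ ?_ hp
    · exact φ_rel
    · simp
    · intro a b _ _ ha hb; simp [map_add, ha, hb]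
    · intro a b _ hb; simp [smul_eq_mul, _root_.map_mul, hb])

@[simp] lemma ψ_mk (p : MvPolynomial (Fin n) (ZMod 2)) :
    ψ (Ideal.Quotient.mk (I n) p) = φ p := rfl




section NormalForm

variable {m : ℕ}

local notation "MK" => Ideal.Quotient.mk (I (m+1))

/-- normal-form representative -/
noncomputable def σ' (x : Model (m+1)) : MvPolynomial (Fin (m+1)) (ZMod 2) :=
  C x.c + ∑ i, C (x.v i) * X i + C x.d * X 0 ^ 2

lemma mk_sq (i : Fin (m+1)) : MK (X i ^ 2) = MK (X 0 ^ 2) := by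
  rw [Ideal.Quotient.eq]
  have h2 : (X i ^ 2 - X 0 ^ 2 : MvPolynomial (Fin (m+1)) (ZMod 2)) = X i ^ 2 + X 0 ^ 2 := by
    rw [CharTwo.sub_eq_add]
  rw [h2]; exact rel_mem_sq i 0

lemma mk_mul_ne {i j : Fin (m+1)} (h : i ≠ j) : MK (X i) * MK (X j) = 0 := by
  rw [← _root_.map_mul, Ideal.Quotient.eq_zero_iff_mem]
  exact rel_mem_mul h

lemma mk_x0sq_mul (i : Fin (m+1)) : MK (X 0 ^ 2) * MK (X i) = 0 := by
  rw [← _root_.map_mul, Ideal.Quotient.eq_zero_iff_mem]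
  by_cases h : i = (0 : Fin (m+1))
  · subst h
    have : (X 0 ^ 2 * X 0 : MvPolynomial (Fin (m+1)) (ZMod 2)) = X 0 ^ 3 := by ring
    rw [this]; exact rel_mem_x3 0
  · have : (X 0 ^ 2 * X i : MvPolynomial (Fin (m+1)) (ZMod 2))
        = (X 0 ^ 2 + X i ^ 2) * X i - X i ^ 3 := by ring
    rw [this]
    exact sub_mem (Ideal.mul_mem_right _ _ (rel_mem_sq 0 i)) (rel_mem_x3 i)

lemma mk_normal (p : MvPolynomial (Fin (m+1)) (ZMod 2)) : MK (σ' (φ p)) = MK p := by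
  induction p using MvPolynomial.induction_on with
  | C a => simp [σ', φ_C, CM]
  | add p q hp hq =>
      have : σ' (φ (p + q)) = σ' (φ p) + σ' (φ q) := by
        rw [_root_.map_add]
        simp only [σ', add_c, add_v, add_d, _root_.map_add, Pi.add_apply, add_mul]
        rw [Finset.sum_add_distrib]; ring
      rw [this, _root_.map_add, hp, hq, _root_.map_add]
  | mul_X p i hp =>
      rw [_root_.map_mul, φ_X]
      have hR0 : MK (p * X i) = MK (σ' (φ p)) * MK (X i) := by
        rw [_root_.map_mul, hp]
      rw [hR0]
      clear hR0 hp
      generalize φ p = x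
      -- compute both sides
      have hxg : x * gen i = ⟨0, x.c • Pi.single i 1, x.v i⟩ := by
        ext <;> simp [gen, dotProduct_single]
      have hL : σ' (x * gen i) = C x.c * X i + C (x.v i) * X 0 ^ 2 := by
        rw [hxg, σ']
        simp only [_root_.map_zero, zero_add]
        congr 1
        rw [Finset.sum_eq_single i]
        · simp
        · intro b _ hb; simp [Pi.single_apply, hb]
        · intro h; exact absurd (Finset.mem_univ i) h
      rw [hL]
      have hR : MK (σ' x) * MK (X i)
          = MK (C x.c * X i) + MK (C (x.v i) * X 0 ^ 2) := by
        have expand : σ' x * X i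
            = C x.c * X i + (∑ j, C (x.v j) * X j * X i) + C x.d * X 0 ^ 2 * X i := by
          rw [σ', add_mul, add_mul, Finset.sum_mul]
        rw [← _root_.map_mul, expand, _root_.map_add, _root_.map_add, _root_.map_sum]
        have hsum : (∑ j, MK (C (x.v j) * X j * X i)) = MK (C (x.v i) * X 0 ^ 2) := by
          rw [Finset.sum_eq_single i]
          · rw [_root_.map_mul, _root_.map_mul, mul_assoc, ← _root_.map_mul, ← pow_two,
              mk_sq i, ← _root_.map_mul]
          · intro b _ hb
            rw [_root_.map_mul, _root_.map_mul, mul_assoc, mk_mul_ne hb, mul_zero]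
          · intro h; exact absurd (Finset.mem_univ i) h
        have hz : MK (C x.d * X 0 ^ 2 * X i) = 0 := by
          rw [_root_.map_mul, _root_.map_mul, mul_assoc, mk_x0sq_mul i, mul_zero]
        rw [hsum, hz, add_zero]
      rw [_root_.map_add, ← hR]

lemma φ_σ' (x : Model (m+1)) : φ (σ' x) = x := by
  rw [σ']
  simp only [_root_.map_add, _root_.map_mul, _root_.map_pow, _root_.map_sum, φ_C, φ_X]
  have h0 : (gen 0 : Model (m+1)) ^ 2 = ⟨0, 0, 1⟩ := by rw [pow_two, gen_sq]
  have h1 : ∀ a : ZMod 2, ∀ i : Fin (m+1), CM a * gen i = ⟨0, a • Pi.single i 1, 0⟩ := by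
    intro a i; ext <;> simp [CM, gen]
  have h2 : CM x.d * (gen (0:Fin (m+1))) ^ 2 = ⟨0, 0, x.d⟩ := by
    rw [h0]; ext <;> simp [CM]
  simp only [h1, h2]
  have h3 : (∑ i, (⟨0, x.v i • Pi.single i 1, 0⟩ : Model (m+1)))
      = ⟨0, x.v, 0⟩ := by
    have hc : ∀ (s : Finset (Fin (m+1))) , (∑ i ∈ s, (⟨0, x.v i • Pi.single i 1, 0⟩ : Model (m+1)))
        = ⟨0, ∑ i ∈ s, x.v i • Pi.single i 1, 0⟩ := by
      intro s
      induction s using Finset.induction_on with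
      | empty => ext <;> simp
      | insert _ _ h ih => rw [Finset.sum_insert h, Finset.sum_insert h, ih]; ext <;> simp
    rw [hc]
    congr 1
    simp [← Pi.single_smul']
    exact Finset.univ_sum_single x.v
  rw [h3]
  ext <;> simp [CM]

noncomputable def modelEquiv : Model (m+1) ≃+* ProjSumCohomology (m+1) := by
  refine (RingEquiv.ofBijective (ψ : ProjSumCohomology (m+1) →+* Model (m+1)) ⟨?_, ?_⟩).symm
  · intro a b hab
    obtain ⟨p, rfl⟩ := Ideal.Quotient.mk_surjective a
    obtain ⟨q, rfl⟩ := Ideal.Quotient.mk_surjective b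
    rw [ψ_mk, ψ_mk] at hab
    rw [← mk_normal p, ← mk_normal q, hab]
  · intro x
    exact ⟨Ideal.Quotient.mk _ (σ' x), by rw [ψ_mk, φ_σ']⟩

@[simp] lemma modelEquiv_symm_apply (q : ProjSumCohomology (m+1)) :
    modelEquiv.symm q = ψ q := rfl

end NormalForm


section Units

variable {m : ℕ}

lemma zmod2_mul_eq_one : ∀ a b : ZMod 2, a * b = 1 → a = 1 := by decide

lemma unit_c (u : (Model (m+1))ˣ) : (u : Model (m+1)).c = 1 := by
  have h : ((u : Model (m+1)) * (u⁻¹ : (Model (m+1))ˣ)).c = 1 := by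
    rw [Units.mul_inv]; simp
  rw [mul_c] at h
  exact zmod2_mul_eq_one _ _ h

/-- `x ↦ 2 * x` as an additive hom `ZMod 2 →+ ZMod 4` -/
def t2 : ZMod 2 →+ ZMod 4 where
  toFun x := 2 * x.val
  map_zero' := by decide
  map_add' := by decide

lemma key1 : ∀ x y : ZMod 2,
    (((x + y).val : ZMod 4)) + t2 (x * y) = (x.val : ZMod 4) + (y.val : ZMod 4) := by decide

/-- the additive invariant -/
def fM (x : Model (m+1)) : ZMod 4 × (Fin m → ZMod 2) :=
  (∑ i, ((x.v i).val : ZMod 4) + t2 x.d, fun j => x.v j.succ)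

lemma fM_mul (x y : Model (m+1)) (hx : x.c = 1) (hy : y.c = 1) :
    fM (x * y) = fM x + fM y := by
  have hv : (x * y).v = x.v + y.v := by
    rw [mul_v, hx, hy, one_smul, one_smul]; exact add_comm _ _
  have hd : (x * y).d = x.d + y.d + x.v ⬝ᵥ y.v := by
    rw [mul_d, hx, hy, one_mul, one_mul]; ring
  ext1
  · show (∑ i, (((x * y).v i).val : ZMod 4)) + t2 ((x * y).d) = _
    rw [hv, hd, map_add, map_add, dotProduct, map_sum]
    have key : (∑ i, ((((x.v + y.v) i)).val : ZMod 4)) + ∑ i, t2 (x.v i * y.v i)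
        = (∑ i, ((x.v i).val : ZMod 4)) + ∑ i, ((y.v i).val : ZMod 4) := by
      rw [← Finset.sum_add_distrib, ← Finset.sum_add_distrib]
      exact Finset.sum_congr rfl fun i _ => key1 (x.v i) (y.v i)
    show _ = (∑ i, ((x.v i).val : ZMod 4) + t2 x.d) + (∑ i, ((y.v i).val : ZMod 4) + t2 y.d)
    linear_combination key
  · show (fun j : Fin m => (x * y).v j.succ) = _
    funext j
    rw [hv]
    rfl

/-- the monoid hom from the unit group -/
def Φ : (Model (m+1))ˣ →* Multiplicative (ZMod 4 × (Fin m → ZMod 2)) where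
  toFun u := Multiplicative.ofAdd (fM (u : Model (m+1)))
  map_one' := by
    have h : fM (1 : Model (m+1)) = 0 := by
      ext1
      · show (∑ i : Fin (m+1), (((1:Model (m+1)).v i).val : ZMod 4)) + t2 (1:Model (m+1)).d = 0
        simp
      · show (fun j : Fin m => (1 : Model (m+1)).v j.succ) = 0
        funext j; simp
    show Multiplicative.ofAdd (fM ((1 : (Model (m+1))ˣ) : Model (m+1))) = 1
    rw [Units.val_one, h]; rfl
  map_mul' u w := by
    show Multiplicative.ofAdd (fM ((u * w : (Model (m+1))ˣ) : Model (m+1))) = _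
    rw [Units.val_mul, fM_mul _ _ (unit_c u) (unit_c w)]
    rfl

lemma zmod_extract : ∀ a b : ZMod 2, (a.val : ZMod 4) + t2 b = 0 → a = 0 ∧ b = 0 := by decide

lemma Φ_injective : Function.Injective (Φ (m := m)) := by
  rw [injective_iff_map_eq_one]
  intro u hu
  have h : fM (u : Model (m+1)) = 0 := hu
  have h1 := congrArg Prod.fst h
  have h2 := congrArg Prod.snd h
  have hsucc : ∀ j : Fin m, (u : Model (m+1)).v j.succ = 0 := fun j => congrFun h2 j
  have hne : ∀ i : Fin (m+1), i ≠ 0 → (u : Model (m+1)).v i = 0 := by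
    intro i hi
    rcases Fin.eq_zero_or_eq_succ i with h0 | ⟨j, rfl⟩
    · exact absurd h0 hi
    · exact hsucc j
  have hsum : (∑ i, (((u : Model (m+1)).v i).val : ZMod 4))
      = (((u : Model (m+1)).v 0).val : ZMod 4) := by
    rw [Fintype.sum_eq_single 0]
    intro i hi
    rw [hne i hi]; rfl
  rw [show fM (u : Model (m+1)) = (_, _) from rfl] at h1
  simp only [Prod.fst] at h1
  rw [hsum] at h1
  obtain ⟨hv0, hd⟩ := zmod_extract _ _ h1
  have : (u : Model (m+1)) = 1 := by
    ext i
    · rw [unit_c u]; simp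
    · rcases Fin.eq_zero_or_eq_succ i with rfl | ⟨j, rfl⟩
      · rw [hv0]; simp
      · rw [hsucc j]; simp
    · rw [hd]; simp
  exact Units.ext this

lemma model_pair_mul_inv (v : Fin (m+1) → ZMod 2) (d : ZMod 2) :
    (⟨1, v, d⟩ : Model (m+1)) * ⟨1, v, d + v ⬝ᵥ v⟩ = 1 := by
  ext i
  · simp
  · show (1:ZMod 2) • v i + (1:ZMod 2) • v i = 0
    rw [one_smul]
    exact CharTwo.add_self_eq_zero _
  · show 1 * (d + v ⬝ᵥ v) + 1 * d + v ⬝ᵥ v = 0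
    rw [one_mul, one_mul]
    generalize v ⬝ᵥ v = e
    revert d e; decide

/-- units correspond to pairs `(v, d)` -/
def unitsEquivProd : (Model (m+1))ˣ ≃ ((Fin (m+1) → ZMod 2) × ZMod 2) where
  toFun u := ((u : Model (m+1)).v, (u : Model (m+1)).d)
  invFun p :=
    { val := ⟨1, p.1, p.2⟩
      inv := ⟨1, p.1, p.2 + p.1 ⬝ᵥ p.1⟩
      val_inv := model_pair_mul_inv p.1 p.2
      inv_val := by rw [mul_comm]; exact model_pair_mul_inv p.1 p.2 }
  left_inv u := by
    apply Units.ext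
    show (⟨1, (u : Model (m+1)).v, (u : Model (m+1)).d⟩ : Model (m+1)) = u
    have := unit_c u
    ext <;> simp [this.symm]
  right_inv p := rfl

lemma card_units_model : Nat.card (Model (m+1))ˣ = 2 ^ (m + 2) := by
  rw [Nat.card_congr unitsEquivProd, Nat.card_prod, Nat.card_fun, Nat.card_zmod,
    Nat.card_eq_fintype_card (α := Fin (m+1)), Fintype.card_fin]
  ring

instance : Finite (Model (m+1))ˣ := Finite.of_equiv _ unitsEquivProd.symm

lemma card_target : Nat.card (Multiplicative (ZMod 4 × (Fin m → ZMod 2))) = 2 ^ (m + 2) := by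
  rw [Nat.card_congr Multiplicative.toAdd, Nat.card_prod, Nat.card_fun, Nat.card_zmod,
    Nat.card_zmod, Nat.card_eq_fintype_card (α := Fin m), Fintype.card_fin]
  ring

lemma Φ_bijective : Function.Bijective (Φ (m := m)) := by
  rw [Nat.bijective_iff_injective_and_card]
  exact ⟨Φ_injective, by rw [card_units_model, card_target]⟩

noncomputable def unitsMulEquiv :
    (Model (m+1))ˣ ≃* Multiplicative (ZMod 4 × (Fin m → ZMod 2)) :=
  MulEquiv.ofBijective Φ Φ_bijective

end Units


section Counting

variable {m : ℕ}

local notation "G" => Multiplicative (ZMod 4 × (Fin m → ZMod 2))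

lemma pow_eq_one_iff_smul (x : G) (k : ℕ) :
    x ^ k = 1 ↔ k • Multiplicative.toAdd x = 0 := by
  rw [show x ^ k = Multiplicative.ofAdd (k • Multiplicative.toAdd x) from by
    rw [← toAdd_pow]; exact (ofAdd_toAdd _).symm, ofAdd_eq_one]

lemma pow_four (x : G) : x ^ 4 = 1 := by
  rw [pow_eq_one_iff_smul]
  ext1
  · show (4 : ℕ) • (Multiplicative.toAdd x).1 = 0
    generalize (Multiplicative.toAdd x).1 = a
    revert a; decide
  · funext j
    show (4 : ℕ) • (Multiplicative.toAdd x).2 j = 0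
    generalize (Multiplicative.toAdd x).2 j = b
    revert b; decide

lemma sq_eq_one_iff (x : G) :
    x ^ 2 = 1 ↔ ((Multiplicative.toAdd x).1 = 0 ∨ (Multiplicative.toAdd x).1 = 2) := by
  rw [pow_eq_one_iff_smul]
  have hsnd : (2 : ℕ) • (Multiplicative.toAdd x).2 = 0 := by
    funext j
    show (2 : ℕ) • (Multiplicative.toAdd x).2 j = 0
    generalize (Multiplicative.toAdd x).2 j = b
    revert b; decide
  have hfst : ∀ a : ZMod 4, ((2 : ℕ) • a = 0 ↔ (a = 0 ∨ a = 2)) := by decide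
  constructor
  · intro h
    exact (hfst _).mp (congrArg Prod.fst h)
  · intro h
    ext1
    · exact (hfst _).mpr h
    · exact hsnd

lemma orderOf_eq_two_iff (x : G) : orderOf x = 2 ↔ (x ^ 2 = 1 ∧ x ≠ 1) := by
  constructor
  · intro h
    refine ⟨?_, ?_⟩
    · have := pow_orderOf_eq_one x; rwa [h] at this
    · intro hx; rw [hx, orderOf_one] at h; omega
  · intro ⟨h1, h2⟩
    exact orderOf_eq_prime h1 h2

lemma orderOf_eq_four_iff (x : G) : orderOf x = 4 ↔ ¬ (x ^ 2 = 1) := by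
  have hdvd : orderOf x ∣ 4 := orderOf_dvd_of_pow_eq_one (pow_four x)
  constructor
  · intro h hsq
    have h2 : orderOf x ∣ 2 := orderOf_dvd_of_pow_eq_one hsq
    rw [h] at h2; omega
  · intro h
    have hmem : orderOf x ∈ Nat.divisors 4 := Nat.mem_divisors.mpr ⟨hdvd, by norm_num⟩
    have hdv : Nat.divisors 4 = {1, 2, 4} := by decide
    rw [hdv] at hmem
    simp only [Finset.mem_insert, Finset.mem_singleton] at hmem
    rcases hmem with h1 | h2 | h4
    · exfalso
      rw [orderOf_eq_one_iff] at h1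
      exact h (by rw [h1, one_pow])
    · exfalso
      have := pow_orderOf_eq_one x
      rw [h2] at this
      exact h this
    · exact h4

end Counting


section Cards

variable {m : ℕ}

local notation "G" => Multiplicative (ZMod 4 × (Fin m → ZMod 2))

lemma card_sq_one : Nat.card {x : G // x ^ 2 = 1} = 2 ^ (m + 1) := by
  have e1 : {x : G // x ^ 2 = 1} ≃
      {p : ZMod 4 × (Fin m → ZMod 2) // p.1 = 0 ∨ p.1 = 2} :=
    (Multiplicative.toAdd (α := ZMod 4 × (Fin m → ZMod 2))).subtypeEquiv
      fun x => sq_eq_one_iff x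
  have e2 : {p : ZMod 4 × (Fin m → ZMod 2) // p.1 = 0 ∨ p.1 = 2}
      ≃ ({a : ZMod 4 // a = 0 ∨ a = 2} × (Fin m → ZMod 2)) :=
    { toFun := fun p => (⟨p.val.1, p.prop⟩, p.val.2)
      invFun := fun q => ⟨(q.1.val, q.2), q.1.prop⟩
      left_inv := fun p => rfl
      right_inv := fun q => rfl }
  rw [Nat.card_congr (e1.trans e2), Nat.card_prod, Nat.card_fun, Nat.card_zmod,
    Nat.card_eq_fintype_card (α := Fin m), Fintype.card_fin]
  have h2 : Nat.card {a : ZMod 4 // a = 0 ∨ a = 2} = 2 := by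
    rw [Nat.card_eq_fintype_card]
    decide
  rw [h2]
  ring

lemma card_order_two : Nat.card {x : G // orderOf x = 2} = 2 ^ (m + 1) - 1 := by
  have e0 : {x : G // orderOf x = 2} ≃ {x : G // x ^ 2 = 1 ∧ x ≠ 1} :=
    Equiv.subtypeEquivRight fun x => orderOf_eq_two_iff x
  have e1 : {x : G // x ^ 2 = 1 ∧ x ≠ 1}
      ≃ {y : {x : G // x ^ 2 = 1} // ¬ (y = ⟨1, one_pow 2⟩)} :=
    (Equiv.subtypeSubtypeEquivSubtypeInter (fun x : G => x ^ 2 = 1)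
        (fun x => x ≠ 1)).symm.trans
      (Equiv.subtypeEquivRight fun y => by
        rw [Subtype.ext_iff])
  rw [Nat.card_congr (e0.trans e1), Nat.card_eq_fintype_card,
    Fintype.card_subtype_compl, Fintype.card_subtype_eq,
    ← Nat.card_eq_fintype_card, card_sq_one]

lemma card_order_four : Nat.card {x : G // orderOf x = 4} = 2 ^ (m + 1) := by
  have e0 : {x : G // orderOf x = 4} ≃ {x : G // ¬ (x ^ 2 = 1)} :=
    Equiv.subtypeEquivRight fun x => orderOf_eq_four_iff x
  rw [Nat.card_congr e0, Nat.card_eq_fintype_card, Fintype.card_subtype_compl,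
    ← Nat.card_eq_fintype_card, ← Nat.card_eq_fintype_card, card_sq_one, card_target]
  have h1 : 2 ^ (m + 2) = 2 * 2 ^ (m + 1) := by ring
  omega

end Cards

noncomputable def finalEquiv (m : ℕ) :
    (ProjSumCohomology (m+1))ˣ ≃* Multiplicative (ZMod 4 × (Fin m → ZMod 2)) :=
  ((Units.mapEquiv modelEquiv.toMulEquiv).symm.trans unitsMulEquiv)


end ProjAux

open ProjAux in
theorem projSum_units (n : ℕ) (hn : 1 ≤ n) :
    Nonempty ((ProjSumCohomology n)ˣ ≃*
      Multiplicative (ZMod 4 × (Fin (n - 1) → ZMod 2))) ∧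
    Nat.card (ProjSumCohomology n)ˣ = 2 ^ (n + 1) ∧
    Nat.card {u : (ProjSumCohomology n)ˣ // orderOf u = 2} = 2 ^ n - 1 ∧
    Nat.card {u : (ProjSumCohomology n)ˣ // orderOf u = 4} = 2 ^ n := by
  obtain ⟨m, rfl⟩ : ∃ m, n = m + 1 := ⟨n - 1, by omega⟩

  set E := finalEquiv m with hE
  have horder : ∀ (u : (ProjSumCohomology (m+1))ˣ) (k : ℕ),
      (orderOf u = k ↔ orderOf (E u) = k) := by
    intro u k
    rw [show orderOf (E u) = orderOf u from orderOf_injective E.toMonoidHom E.injective u]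
  refine ⟨⟨E⟩, ?_, ?_, ?_⟩
  · rw [Nat.card_congr E.toEquiv, card_target]
  · have e2 : {u : (ProjSumCohomology (m+1))ˣ // orderOf u = 2}
        ≃ {x : Multiplicative (ZMod 4 × (Fin m → ZMod 2)) // orderOf x = 2} :=
      E.toEquiv.subtypeEquiv fun u => horder u 2
    rw [Nat.card_congr e2, card_order_two]
  · have e4 : {u : (ProjSumCohomology (m+1))ˣ // orderOf u = 4}
        ≃ {x : Multiplicative (ZMod 4 × (Fin m → ZMod 2)) // orderOf x = 4} :=
      E.toEquiv.subtypeEquiv fun u => horder u 4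
    rw [Nat.card_congr e4, card_order_four]
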